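/- Construction of sub- and supersolutions for the modified eikonal operator from the path distance: Let w : G × G → [0, ∞), define I_e(u, x) := max_{z∈G} w(z, x)·(u(z) − u(x)), and let f, g ∈ C(G) with f(x) > 0 for all x ∈ G. Suppose d ∈ C(G) satisfies max_{y∈G} w(y, x)·(d(x) − d(y)) = 1 for all x ∈ G∖Γ and d(x) = 0 for all x ∈ Γ. Then: (1) the constant function V ≡ max_{x∈Γ} g(x) satisfies I_e(V, x) ≤ f(x) for all x ∈ G∖Γ and V ≥ g on Γ; (2) the function U := −(max_{x∈G} f(x))·d + min_{x∈Γ} g(x) satisfies I_e(U, x) ≥ f(x) for all x ∈ G∖Γ and U ≤ g on Γ. -/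

import Mathlib

/-- The modified eikonal operator. -/
noncomputable def Ie {G : Type*} [Fintype G] (w : G → G → ℝ) (u : G → ℝ) (x : G) : ℝ :=
  ⨆ z : G, w z x * (u z - u x)

/-- Construction of sub- and supersolutions for the modified eikonal operator
from the path distance function. -/
theorem eikonal_sub_supersolutions {G : Type*} [Fintype G] [Nonempty G]
    (Γ : Finset G) (hΓne : Γ.Nonempty) (hΓnG : Γ ≠ Finset.univ)
    (w : G → G → ℝ) (hw : ∀ x y : G, 0 ≤ w x y)
    (f g : G → ℝ) (hf : ∀ x : G, 0 < f x)
    (d : G → ℝ)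
    (hd : ∀ x ∉ Γ, (⨆ y : G, w y x * (d x - d y)) = 1)
    (hd0 : ∀ x ∈ Γ, d x = 0) :
    ((∀ x ∉ Γ, Ie w (fun _ => Γ.sup' hΓne g) x ≤ f x) ∧
      (∀ x ∈ Γ, g x ≤ Γ.sup' hΓne g)) ∧
    ((∀ x ∉ Γ,
        f x ≤ Ie w (fun y => -(Finset.univ.sup' Finset.univ_nonempty f) * d y
          + Γ.inf' hΓne g) x) ∧
      (∀ x ∈ Γ,
        -(Finset.univ.sup' Finset.univ_nonempty f) * d x + Γ.inf' hΓne g ≤ g x)) := by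
  set M := Finset.univ.sup' Finset.univ_nonempty f with hM
  have hM0 : 0 ≤ M := le_trans (hf (Classical.arbitrary G)).le
    (Finset.le_sup' f (Finset.mem_univ _))
  refine ⟨⟨fun x hx => ?_, fun x hx => Finset.le_sup' g hx⟩,
    ⟨fun x hx => ?_, fun x hx => ?_⟩⟩
  · have : Ie w (fun _ => Γ.sup' hΓne g) x = 0 := by
      simp [Ie]
    rw [this]; exact (hf x).le
  · have key : Ie w (fun y => -M * d y + Γ.inf' hΓne g) x
        = ⨆ z : G, M * (w z x * (d x - d z)) := by
      unfold Ie
      congr 1; funext z; ring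
    rw [key]
    have : (⨆ z : G, M * (w z x * (d x - d z))) = M * ⨆ z : G, w z x * (d x - d z) := by
      rw [Real.mul_iSup_of_nonneg hM0]
    rw [this, hd x hx, mul_one]
    exact Finset.le_sup' f (Finset.mem_univ x)
  · rw [hd0 x hx]
    simp only [mul_zero, zero_add]
    exact Finset.inf'_le g hx
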